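/- Let ε ∈ (0,1] and C > 0. Suppose ξ and ξ̃ are complex random variables with matching moments up to second order, both having E|ξ|^{2+ε} ≤ C and E|ξ̃|^{2+ε} ≤ C, and let f : ℝ² → ℂ be a C³ function. Write f(x,y) for f evaluated at (Re w, Im w). Then |E f(Re ξ, Im ξ) − E f(Re ξ̃, Im ξ̃)| ≤ C' · M₃^ε · M₂^{1−ε}, where M_i denotes the sum of the supremum norms of all partial derivatives of f of order exactly i, and C' depends only on C and ε. -/

import Mathlib

open MeasureTheory
open scoped ENNReal

lemma min_interp (a b ε : ℝ) (ha : 0 ≤ a) (hb : 0 ≤ b) (hε : 0 < ε) (hε1 : ε ≤ 1) :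
    min a b ≤ a ^ ε * b ^ (1 - ε) := by
  rcases eq_or_lt_of_le (le_min ha hb) with h | h
  · rw [← h]
    positivity
  · calc min a b = (min a b) ^ ε * (min a b) ^ (1 - ε) := by
          rw [← Real.rpow_add h, add_sub_cancel, Real.rpow_one]
      _ ≤ a ^ ε * b ^ (1 - ε) :=
          mul_le_mul (Real.rpow_le_rpow h.le (min_le_left _ _) hε.le)
            (Real.rpow_le_rpow h.le (min_le_right _ _) (by linarith))
            (Real.rpow_nonneg h.le _) (Real.rpow_nonneg ha _)

lemma min_pow_interp (M₂ M₃ r ε : ℝ) (hM2 : 0 ≤ M₂) (hM3 : 0 ≤ M₃) (hr : 0 ≤ r)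
    (hε : 0 < ε) (hε1 : ε ≤ 1) :
    min (2 * M₂ * r ^ 2) (M₃ * r ^ 3) ≤ 2 * (M₃ ^ ε * M₂ ^ (1 - ε)) * r ^ (2 + ε) := by
  rcases eq_or_lt_of_le hr with hr0 | hr0
  · have : r = 0 := hr0.symm
    subst this
    have : min (2 * M₂ * (0:ℝ) ^ 2) (M₃ * (0:ℝ) ^ 3) = 0 := by norm_num
    rw [this]
    positivity
  have h1ε : 0 ≤ 1 - ε := by linarith
  calc min (2 * M₂ * r ^ 2) (M₃ * r ^ 3)
      ≤ (M₃ * r ^ 3) ^ ε * (2 * M₂ * r ^ 2) ^ (1 - ε) := by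
        rw [min_comm]
        exact min_interp _ _ ε (by positivity) (by positivity) hε hε1
    _ = M₃ ^ ε * (2 : ℝ) ^ (1 - ε) * M₂ ^ (1 - ε) * ((r ^ 3) ^ ε * (r ^ 2) ^ (1 - ε)) := by
        rw [Real.mul_rpow hM3 (by positivity), Real.mul_rpow (by positivity) (by positivity),
          Real.mul_rpow (by norm_num) hM2]
        ring
    _ = M₃ ^ ε * (2 : ℝ) ^ (1 - ε) * M₂ ^ (1 - ε) * r ^ (2 + ε) := by
        congr 1
        rw [← Real.rpow_natCast r 3, ← Real.rpow_natCast r 2, ← Real.rpow_mul hr,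
          ← Real.rpow_mul hr, ← Real.rpow_add hr0]
        norm_num
        ring_nf
    _ ≤ M₃ ^ ε * 2 * M₂ ^ (1 - ε) * r ^ (2 + ε) := by
        have h2 : (2 : ℝ) ^ (1 - ε) ≤ 2 := by
          calc (2:ℝ) ^ (1 - ε) ≤ (2:ℝ) ^ (1:ℝ) :=
              Real.rpow_le_rpow_of_exponent_le one_le_two (by linarith)
            _ = 2 := Real.rpow_one 2
        have := mul_le_mul_of_nonneg_left h2 (Real.rpow_nonneg hM3 ε)
        have := mul_le_mul_of_nonneg_right this (Real.rpow_nonneg hM2 (1 - ε))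
        exact mul_le_mul_of_nonneg_right this (Real.rpow_nonneg hr _)
    _ = 2 * (M₃ ^ ε * M₂ ^ (1 - ε)) * r ^ (2 + ε) := by ring

noncomputable instance instNACGClm2 : NormedAddCommGroup (ℝ × ℝ →L[ℝ] ℝ × ℝ →L[ℝ] ℂ) := inferInstance
noncomputable instance instNSClm2 : NormedSpace ℝ (ℝ × ℝ →L[ℝ] ℝ × ℝ →L[ℝ] ℂ) := inferInstance

set_option maxHeartbeats 1000000 in
lemma taylor_min_bound (f : ℝ × ℝ → ℂ) (hf : ContDiff ℝ 3 f) (M₂ M₃ : ℝ)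
    (h2 : ∀ w, ‖iteratedFDeriv ℝ 2 f w‖ ≤ M₂) (h3 : ∀ w, ‖iteratedFDeriv ℝ 3 f w‖ ≤ M₃)
    (w : ℝ × ℝ) :
    ‖f w - (f 0 + fderiv ℝ f 0 w + (2⁻¹ : ℝ) • fderiv ℝ (fderiv ℝ f) 0 w w)‖ ≤
      min (2 * M₂ * ‖w‖ ^ 2) (M₃ * ‖w‖ ^ 3) := by
  set F1 := fderiv ℝ f with hF1
  set F2 := fderiv ℝ F1 with hF2
  set D2 := F2 0 with hD2
  have hd1 : Differentiable ℝ f := hf.differentiable (by norm_num)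
  have hf1 : ContDiff ℝ 2 F1 := hf.fderiv_right (by norm_num)
  have hd2 : Differentiable ℝ F1 := hf1.differentiable (by norm_num)
  have hf2 : ContDiff ℝ 1 F2 := hf1.fderiv_right (by norm_num)
  have hd3 : Differentiable ℝ F2 := hf2.differentiable (by norm_num)
  have hn2 : ∀ u, ‖F2 u‖ ≤ M₂ := by
    intro u
    have : ‖F2 u‖ = ‖iteratedFDeriv ℝ 2 f u‖ := by
      rw [← norm_iteratedFDeriv_fderiv (n := 1), ← norm_iteratedFDeriv_fderiv (n := 0),
        norm_iteratedFDeriv_zero]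
    rw [this]; exact h2 u
  have hn3 : ∀ u, ‖fderiv ℝ F2 u‖ ≤ M₃ := by
    intro u
    have : ‖fderiv ℝ F2 u‖ = ‖iteratedFDeriv ℝ 3 f u‖ := by
      rw [← norm_iteratedFDeriv_fderiv (n := 2), ← norm_iteratedFDeriv_fderiv (n := 1),
        ← norm_iteratedFDeriv_fderiv (n := 0), norm_iteratedFDeriv_zero]
    rw [this]; exact h3 u
  have stepA : ∀ u : ℝ × ℝ, ‖F2 u - D2‖ ≤ M₃ * ‖u‖ := by
    intro u
    have := (convex_univ (𝕜 := ℝ) (E := ℝ × ℝ)).norm_image_sub_le_of_norm_fderiv_le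
      (f := F2) (C := M₃) (x := 0) (y := u) (fun x _ => hd3 x) (fun x _ => hn3 x)
      trivial trivial
    simpa using this
  have stepB3 : ∀ u : ℝ × ℝ, ‖F1 u - F1 0 - D2 u‖ ≤ M₃ * ‖u‖ ^ 2 := by
    intro u
    set φ : (ℝ × ℝ) → ((ℝ × ℝ) →L[ℝ] ℂ) := fun v => F1 v - D2 v with hφ
    have hdφ : ∀ v, HasFDerivAt φ (F2 v - D2) v := fun v =>
      ((hd2 v).hasFDerivAt).sub D2.hasFDerivAt
    have key := (convex_closedBall (0 : ℝ × ℝ) ‖u‖).norm_image_sub_le_of_norm_fderiv_le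
      (f := φ) (C := M₃ * ‖u‖) (x := 0) (y := u) (fun x _ => (hdφ x).differentiableAt)
      (fun x hx => by
        rw [(hdφ x).fderiv]
        calc ‖F2 x - D2‖ ≤ M₃ * ‖x‖ := stepA x
          _ ≤ M₃ * ‖u‖ := by
              have hx' : ‖x‖ ≤ ‖u‖ := by simpa using mem_closedBall_iff_norm.mp hx
              have hM3 : 0 ≤ M₃ := le_trans (norm_nonneg _) (h3 0)
              exact mul_le_mul_of_nonneg_left hx' hM3)
      (Metric.mem_closedBall_self (norm_nonneg u))
      (by simp [Metric.mem_closedBall, dist_eq_norm])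
    have heq : φ u - φ 0 = F1 u - F1 0 - D2 u := by
      simp only [hφ, map_zero, sub_zero]
      abel
    rw [heq] at key
    calc ‖F1 u - F1 0 - D2 u‖ ≤ M₃ * ‖u‖ * ‖u - 0‖ := key
      _ = M₃ * ‖u‖ ^ 2 := by rw [sub_zero]; ring
  have hM2 : 0 ≤ M₂ := le_trans (norm_nonneg _) (h2 0)
  have stepB2 : ∀ u : ℝ × ℝ, ‖F1 u - F1 0 - D2 u‖ ≤ 2 * M₂ * ‖u‖ := by
    intro u
    have h1 : ‖F1 u - F1 0‖ ≤ M₂ * ‖u‖ := by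
      have := (convex_univ (𝕜 := ℝ) (E := ℝ × ℝ)).norm_image_sub_le_of_norm_fderiv_le
        (f := F1) (C := M₂) (x := 0) (y := u) (fun x _ => hd2 x) (fun x _ => hn2 x)
        trivial trivial
      simpa using this
    have h2' : ‖D2 u‖ ≤ M₂ * ‖u‖ :=
      le_trans (D2.le_opNorm u) (mul_le_mul_of_nonneg_right (hn2 0) (norm_nonneg u))
    calc ‖F1 u - F1 0 - D2 u‖ ≤ ‖F1 u - F1 0‖ + ‖D2 u‖ := norm_sub_le _ _
      _ ≤ M₂ * ‖u‖ + M₂ * ‖u‖ := add_le_add h1 h2'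
      _ = 2 * M₂ * ‖u‖ := by ring
  have hsymm : ∀ v w : ℝ × ℝ, D2 v w = D2 w v :=
    second_derivative_symmetric (fun y => (hd1 y).hasFDerivAt) ((hd2 0).hasFDerivAt)
  set ψ : (ℝ × ℝ) → ℂ := fun u => f u - F1 0 u - (2⁻¹ : ℝ) • D2 u u with hψ
  have hdψ : ∀ u, HasFDerivAt ψ (F1 u - F1 0 - D2 u) u := by
    intro u
    have hq : HasFDerivAt (fun v : ℝ × ℝ => D2 v v)
        (((D2.isBoundedBilinearMap).deriv (u, u)).comp
          ((ContinuousLinearMap.id ℝ (ℝ × ℝ)).prod (ContinuousLinearMap.id ℝ (ℝ × ℝ)))) u :=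
      by
        have hdiag : HasFDerivAt (fun v : ℝ × ℝ => (v, v))
            ((ContinuousLinearMap.id ℝ (ℝ × ℝ)).prod (ContinuousLinearMap.id ℝ (ℝ × ℝ))) u :=
          HasFDerivAt.prodMk (hasFDerivAt_id u) (hasFDerivAt_id u)
        exact HasFDerivAt.comp (g := fun p : (ℝ × ℝ) × (ℝ × ℝ) => D2 p.1 p.2) (f := fun v : ℝ × ℝ => (v, v)) u
          ((D2.isBoundedBilinearMap).hasFDerivAt (u, u)) hdiag
    have hq' := hq.const_smul (2⁻¹ : ℝ)
    have heq : (2⁻¹ : ℝ) • (((D2.isBoundedBilinearMap).deriv (u, u)).comp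
          ((ContinuousLinearMap.id ℝ (ℝ × ℝ)).prod (ContinuousLinearMap.id ℝ (ℝ × ℝ)))) = D2 u := by
      refine ContinuousLinearMap.ext fun h => ?_
      simp only [ContinuousLinearMap.smul_apply, ContinuousLinearMap.coe_comp',
        Function.comp_apply, ContinuousLinearMap.prod_apply, ContinuousLinearMap.coe_id', id_eq,
        IsBoundedBilinearMap.deriv_apply]
      rw [hsymm h u, ← two_smul ℝ (D2 u h), smul_smul]
      norm_num
    rw [heq] at hq'
    exact (((hd1 u).hasFDerivAt).sub (F1 0).hasFDerivAt).sub hq'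
  have key := (convex_closedBall (0 : ℝ × ℝ) ‖w‖).norm_image_sub_le_of_norm_fderiv_le
    (f := ψ) (C := min (2 * M₂ * ‖w‖) (M₃ * ‖w‖ ^ 2)) (x := 0) (y := w)
    (fun x _ => (hdψ x).differentiableAt)
    (fun x hx => by
      rw [(hdψ x).fderiv]
      have hx' : ‖x‖ ≤ ‖w‖ := by simpa using mem_closedBall_iff_norm.mp hx
      have hM3 : 0 ≤ M₃ := le_trans (norm_nonneg _) (h3 0)
      refine le_min ?_ ?_
      · exact le_trans (stepB2 x)
          (mul_le_mul_of_nonneg_left hx' (by linarith : (0:ℝ) ≤ 2 * M₂))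
      · exact le_trans (stepB3 x)
          (mul_le_mul_of_nonneg_left (pow_le_pow_left₀ (norm_nonneg x) hx' 2) hM3))
    (Metric.mem_closedBall_self (norm_nonneg w))
    (by simp [Metric.mem_closedBall, dist_eq_norm])
  have hψw : ψ w - ψ 0 = f w - (f 0 + F1 0 w + (2⁻¹ : ℝ) • D2 w w) := by
    simp only [hψ, map_zero, ContinuousLinearMap.zero_apply, smul_zero, sub_zero]
    abel
  rw [hψw] at key
  rw [sub_zero] at key
  refine le_trans key (le_min ?_ ?_)
  · calc min (2 * M₂ * ‖w‖) (M₃ * ‖w‖ ^ 2) * ‖w‖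
        ≤ (2 * M₂ * ‖w‖) * ‖w‖ :=
          mul_le_mul_of_nonneg_right (min_le_left _ _) (norm_nonneg w)
      _ = 2 * M₂ * ‖w‖ ^ 2 := by ring
  · calc min (2 * M₂ * ‖w‖) (M₃ * ‖w‖ ^ 2) * ‖w‖
        ≤ (M₃ * ‖w‖ ^ 2) * ‖w‖ :=
          mul_le_mul_of_nonneg_right (min_le_right _ _) (norm_nonneg w)
      _ = M₃ * ‖w‖ ^ 3 := by ring

set_option maxHeartbeats 2000000 in
/-- Single-swap Lindeberg estimate: if `ξ` and `ξ̃` have matching moments up to second order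
and uniformly bounded `(2+ε)`-moments, and `f : ℝ² → ℂ` is `C³` with second and third
derivatives bounded by `M₂` and `M₃`, then
`|E f(Re ξ, Im ξ) − E f(Re ξ̃, Im ξ̃)| ≤ C' M₃^ε M₂^{1−ε}`. -/
theorem stmt_13 (ε C : ℝ) (hε : 0 < ε) (hε1 : ε ≤ 1) (hC : 0 < C) :
    ∃ C' : ℝ, 0 < C' ∧
      ∀ (Ω : Type) (_ : MeasurableSpace Ω) (μ : Measure Ω), IsProbabilityMeasure μ →
        ∀ (ξ ξ' : Ω → ℂ) (f : ℝ × ℝ → ℂ) (M₂ M₃ : ℝ),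
        Measurable ξ → Measurable ξ' →
        MemLp ξ (ENNReal.ofReal (2 + ε)) μ → MemLp ξ' (ENNReal.ofReal (2 + ε)) μ →
        (∫ ω, ‖ξ ω‖ ^ (2 + ε) ∂μ) ≤ C → (∫ ω, ‖ξ' ω‖ ^ (2 + ε) ∂μ) ≤ C →
        (∀ a b : ℕ, a + b ≤ 2 →
          (∫ ω, (ξ ω).re ^ a * (ξ ω).im ^ b ∂μ) =
            ∫ ω, (ξ' ω).re ^ a * (ξ' ω).im ^ b ∂μ) →
        ContDiff ℝ 3 f → 0 ≤ M₂ → 0 ≤ M₃ →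
        (∀ w, ‖iteratedFDeriv ℝ 2 f w‖ ≤ M₂) →
        (∀ w, ‖iteratedFDeriv ℝ 3 f w‖ ≤ M₃) →
        ‖(∫ ω, f ((ξ ω).re, (ξ ω).im) ∂μ) - ∫ ω, f ((ξ' ω).re, (ξ' ω).im) ∂μ‖ ≤
          C' * M₃ ^ ε * M₂ ^ (1 - ε) := by
  refine ⟨4 * C, by positivity, ?_⟩
  intro Ω mΩ μ hμ ξ ξ' f M₂ M₃ hmξ hmξ' hℒξ hℒξ' hCξ hCξ' hmom hf hM2 hM3 h2 h3
  haveI := hμ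
  set D1 := fderiv ℝ f 0 with hD1def
  set D2 := fderiv ℝ (fderiv ℝ f) 0 with hD2def
  set T : ℝ × ℝ → ℂ := fun w => f 0 + D1 w + (2⁻¹ : ℝ) • D2 w w with hTdef
  set g : ℝ × ℝ → ℂ := fun w => f w - T w with hgdef
  set K : ℝ := 2 * (M₃ ^ ε * M₂ ^ (1 - ε)) with hKdef
  have hK : 0 ≤ K := by positivity
  have hgb : ∀ w, ‖g w‖ ≤ K * ‖w‖ ^ (2 + ε) := fun w =>
    le_trans (taylor_min_bound f hf M₂ M₃ h2 h3 w)
      (min_pow_interp M₂ M₃ ‖w‖ ε hM2 hM3 (norm_nonneg w) hε hε1)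
  have hTcont : Continuous T := by
    refine (continuous_const.add D1.continuous).add ?_
    exact (((D2.isBoundedBilinearMap.continuous).comp
      (continuous_id.prodMk continuous_id)).const_smul (2⁻¹ : ℝ))
  have hgcont : Continuous g := (hf.continuous).sub hTcont
  have hp0 : (0:ℝ) < 2 + ε := by linarith
  have hpne : ENNReal.ofReal (2 + ε) ≠ 0 := by
    simp only [ne_eq, ENNReal.ofReal_eq_zero, not_le]; linarith
  have hpnetop : ENNReal.ofReal (2 + ε) ≠ ⊤ := ENNReal.ofReal_ne_top
  have htoReal : (ENNReal.ofReal (2 + ε)).toReal = 2 + ε := ENNReal.toReal_ofReal (by linarith)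
  have h2le : (2 : ℝ≥0∞) ≤ ENNReal.ofReal (2 + ε) := by
    rw [← ENNReal.ofReal_ofNat]
    exact ENNReal.ofReal_le_ofReal (le_add_of_nonneg_right hε.le)
  have h1le : (1 : ℝ≥0∞) ≤ ENNReal.ofReal (2 + ε) :=
    le_trans (by norm_num) h2le
  -- the main per-variable claim
  have main : ∀ ζ : Ω → ℂ, Measurable ζ → MemLp ζ (ENNReal.ofReal (2 + ε)) μ →
      (∫ ω, ‖ζ ω‖ ^ (2 + ε) ∂μ) ≤ C →
      Integrable (fun ω => g ((ζ ω).re, (ζ ω).im)) μ ∧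
      (∫ ω, f ((ζ ω).re, (ζ ω).im) ∂μ) =
        (f 0 + (∫ ω, (ζ ω).re ∂μ) • D1 (1, 0) + (∫ ω, (ζ ω).im ∂μ) • D1 (0, 1)
          + (2⁻¹ * ∫ ω, (ζ ω).re * (ζ ω).re ∂μ) • D2 (1, 0) (1, 0)
          + (2⁻¹ * ∫ ω, (ζ ω).re * (ζ ω).im ∂μ) • D2 (1, 0) (0, 1)
          + (2⁻¹ * ∫ ω, (ζ ω).im * (ζ ω).re ∂μ) • D2 (0, 1) (1, 0)
          + (2⁻¹ * ∫ ω, (ζ ω).im * (ζ ω).im ∂μ) • D2 (0, 1) (0, 1))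
          + ∫ ω, g ((ζ ω).re, (ζ ω).im) ∂μ ∧
      ‖∫ ω, g ((ζ ω).re, (ζ ω).im) ∂μ‖ ≤ K * C := by
    intro ζ hmζ hℒζ hCζ
    have hζn : Integrable (fun ω => ‖ζ ω‖ ^ (2 + ε)) μ := by
      have := hℒζ.integrable_norm_rpow hpne hpnetop
      rwa [htoReal] at this
    have hwle : ∀ ω, ‖(((ζ ω).re, (ζ ω).im) : ℝ × ℝ)‖ ≤ ‖ζ ω‖ := fun ω => by
      rw [Prod.norm_def]
      simp only [Real.norm_eq_abs]
      exact max_le (Complex.abs_re_le_norm _) (Complex.abs_im_le_norm _)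
    have hgζb : ∀ ω, ‖g ((ζ ω).re, (ζ ω).im)‖ ≤ K * ‖ζ ω‖ ^ (2 + ε) := fun ω =>
      le_trans (hgb _) (mul_le_mul_of_nonneg_left
        (Real.rpow_le_rpow (norm_nonneg _) (hwle ω) (by linarith)) hK)
    have hmw : Measurable fun ω => (((ζ ω).re, (ζ ω).im) : ℝ × ℝ) :=
      (Complex.measurable_re.comp hmζ).prodMk (Complex.measurable_im.comp hmζ)
    have haesm : AEStronglyMeasurable (fun ω => g ((ζ ω).re, (ζ ω).im)) μ :=
      hgcont.comp_aestronglyMeasurable hmw.aestronglyMeasurable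
    have hgint : Integrable (fun ω => g ((ζ ω).re, (ζ ω).im)) μ := by
      refine Integrable.mono (hζn.const_mul K) haesm (ae_of_all _ fun ω => ?_)
      calc ‖g ((ζ ω).re, (ζ ω).im)‖ ≤ K * ‖ζ ω‖ ^ (2 + ε) := hgζb ω
        _ ≤ ‖K * ‖ζ ω‖ ^ (2 + ε)‖ := le_abs_self _
    have hζ1 : Integrable ζ μ :=
      memLp_one_iff_integrable.mp (hℒζ.mono_exponent h1le)
    have hx : Integrable (fun ω => (ζ ω).re) μ := by
      have := hζ1.re
      simpa using this
    have hy : Integrable (fun ω => (ζ ω).im) μ := by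
      have := hζ1.im
      simpa using this
    have hζ2 : MemLp ζ 2 μ := hℒζ.mono_exponent h2le
    have hn2int : Integrable (fun ω => ‖ζ ω‖ ^ (2:ℕ)) μ := by
      have := hζ2.integrable_norm_rpow (by norm_num) (by norm_num)
      have h22 : ∀ ω : Ω, ‖ζ ω‖ ^ ((2:ℝ≥0∞)).toReal = ‖ζ ω‖ ^ (2:ℕ) := fun ω => by
        rw [ENNReal.toReal_ofNat, ← Real.rpow_natCast (‖ζ ω‖) 2]
        norm_num
      simp only [h22] at this
      exact this
    have hprod : ∀ a b : Ω → ℝ, Measurable a → Measurable b →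
        (∀ ω, |a ω| ≤ ‖ζ ω‖) → (∀ ω, |b ω| ≤ ‖ζ ω‖) →
        Integrable (fun ω => a ω * b ω) μ := by
      intro a b hma hmb hba hbb
      refine Integrable.mono hn2int ((hma.mul hmb).aestronglyMeasurable)
        (ae_of_all _ fun ω => ?_)
      rw [Real.norm_eq_abs, abs_mul, Real.norm_eq_abs]
      calc |a ω| * |b ω| ≤ ‖ζ ω‖ * ‖ζ ω‖ :=
            mul_le_mul (hba ω) (hbb ω) (abs_nonneg _) (norm_nonneg _)
        _ = ‖ζ ω‖ ^ (2:ℕ) := by ring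
        _ ≤ |‖ζ ω‖ ^ (2:ℕ)| := le_abs_self _
    have hre : ∀ ω, |(ζ ω).re| ≤ ‖ζ ω‖ := fun ω => Complex.abs_re_le_norm _
    have him : ∀ ω, |(ζ ω).im| ≤ ‖ζ ω‖ := fun ω => Complex.abs_im_le_norm _
    have hmre : Measurable fun ω => (ζ ω).re := Complex.measurable_re.comp hmζ
    have hmim : Measurable fun ω => (ζ ω).im := Complex.measurable_im.comp hmζ
    have hxx := hprod _ _ hmre hmre hre hre
    have hxy := hprod _ _ hmre hmim hre him
    have hyx := hprod _ _ hmim hmre him hre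
    have hyy := hprod _ _ hmim hmim him him
    -- expansion of T
    have hTexp : ∀ x y : ℝ, T (x, y) =
        f 0 + x • D1 (1, 0) + y • D1 (0, 1)
          + (2⁻¹ * (x * x)) • D2 (1, 0) (1, 0)
          + (2⁻¹ * (x * y)) • D2 (1, 0) (0, 1)
          + (2⁻¹ * (y * x)) • D2 (0, 1) (1, 0)
          + (2⁻¹ * (y * y)) • D2 (0, 1) (0, 1) := by
      intro x y
      have hxy' : ((x, y) : ℝ × ℝ) = x • ((1:ℝ), (0:ℝ)) + y • ((0:ℝ), (1:ℝ)) := by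
        simp [Prod.ext_iff]
      rw [hTdef]
      simp only [hxy', map_add, _root_.map_smul, ContinuousLinearMap.add_apply,
        ContinuousLinearMap.smul_apply, smul_add, smul_smul]
      module
    have hTint : Integrable (fun ω => T ((ζ ω).re, (ζ ω).im)) μ := by
      have heq : (fun ω => T ((ζ ω).re, (ζ ω).im)) = fun ω =>
          f 0 + (ζ ω).re • D1 (1, 0) + (ζ ω).im • D1 (0, 1)
            + (2⁻¹ * ((ζ ω).re * (ζ ω).re)) • D2 (1, 0) (1, 0)
            + (2⁻¹ * ((ζ ω).re * (ζ ω).im)) • D2 (1, 0) (0, 1)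
            + (2⁻¹ * ((ζ ω).im * (ζ ω).re)) • D2 (0, 1) (1, 0)
            + (2⁻¹ * ((ζ ω).im * (ζ ω).im)) • D2 (0, 1) (0, 1) :=
        funext fun ω => hTexp _ _
      rw [heq]
      have i0 : Integrable (fun ω => f 0) μ := integrable_const (f 0)
      have i1 : Integrable (fun ω => (ζ ω).re • D1 (1, 0)) μ := hx.smul_const (D1 (1, 0))
      have i2 : Integrable (fun ω => (ζ ω).im • D1 (0, 1)) μ := hy.smul_const (D1 (0, 1))
      have i3 : Integrable (fun ω => (2⁻¹ * ((ζ ω).re * (ζ ω).re)) • D2 (1, 0) (1, 0)) μ := (hxx.const_mul 2⁻¹).smul_const (D2 (1, 0) (1, 0))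
      have i4 : Integrable (fun ω => (2⁻¹ * ((ζ ω).re * (ζ ω).im)) • D2 (1, 0) (0, 1)) μ := (hxy.const_mul 2⁻¹).smul_const (D2 (1, 0) (0, 1))
      have i5 : Integrable (fun ω => (2⁻¹ * ((ζ ω).im * (ζ ω).re)) • D2 (0, 1) (1, 0)) μ := (hyx.const_mul 2⁻¹).smul_const (D2 (0, 1) (1, 0))
      have i6 : Integrable (fun ω => (2⁻¹ * ((ζ ω).im * (ζ ω).im)) • D2 (0, 1) (0, 1)) μ := (hyy.const_mul 2⁻¹).smul_const (D2 (0, 1) (0, 1))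
      exact ((((((i0.add i1).add i2).add i3).add i4).add i5).add i6)
    have hTval : (∫ ω, T ((ζ ω).re, (ζ ω).im) ∂μ) =
        f 0 + (∫ ω, (ζ ω).re ∂μ) • D1 (1, 0) + (∫ ω, (ζ ω).im ∂μ) • D1 (0, 1)
          + (2⁻¹ * ∫ ω, (ζ ω).re * (ζ ω).re ∂μ) • D2 (1, 0) (1, 0)
          + (2⁻¹ * ∫ ω, (ζ ω).re * (ζ ω).im ∂μ) • D2 (1, 0) (0, 1)
          + (2⁻¹ * ∫ ω, (ζ ω).im * (ζ ω).re ∂μ) • D2 (0, 1) (1, 0)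
          + (2⁻¹ * ∫ ω, (ζ ω).im * (ζ ω).im ∂μ) • D2 (0, 1) (0, 1) := by
      have heq : (fun ω => T ((ζ ω).re, (ζ ω).im)) = fun ω =>
          f 0 + (ζ ω).re • D1 (1, 0) + (ζ ω).im • D1 (0, 1)
            + (2⁻¹ * ((ζ ω).re * (ζ ω).re)) • D2 (1, 0) (1, 0)
            + (2⁻¹ * ((ζ ω).re * (ζ ω).im)) • D2 (1, 0) (0, 1)
            + (2⁻¹ * ((ζ ω).im * (ζ ω).re)) • D2 (0, 1) (1, 0)
            + (2⁻¹ * ((ζ ω).im * (ζ ω).im)) • D2 (0, 1) (0, 1) :=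
        funext fun ω => hTexp _ _
      rw [heq]
      have i0 : Integrable (fun ω => f 0) μ := integrable_const (f 0)
      have i1 : Integrable (fun ω => (ζ ω).re • D1 (1, 0)) μ := hx.smul_const (D1 (1, 0))
      have i2 : Integrable (fun ω => (ζ ω).im • D1 (0, 1)) μ := hy.smul_const (D1 (0, 1))
      have i3 : Integrable (fun ω => (2⁻¹ * ((ζ ω).re * (ζ ω).re)) • D2 (1, 0) (1, 0)) μ := (hxx.const_mul 2⁻¹).smul_const (D2 (1, 0) (1, 0))
      have i4 : Integrable (fun ω => (2⁻¹ * ((ζ ω).re * (ζ ω).im)) • D2 (1, 0) (0, 1)) μ := (hxy.const_mul 2⁻¹).smul_const (D2 (1, 0) (0, 1))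
      have i5 : Integrable (fun ω => (2⁻¹ * ((ζ ω).im * (ζ ω).re)) • D2 (0, 1) (1, 0)) μ := (hyx.const_mul 2⁻¹).smul_const (D2 (0, 1) (1, 0))
      have i6 : Integrable (fun ω => (2⁻¹ * ((ζ ω).im * (ζ ω).im)) • D2 (0, 1) (0, 1)) μ := (hyy.const_mul 2⁻¹).smul_const (D2 (0, 1) (0, 1))
      have p0 := i0
      have p1 : Integrable (fun ω => f 0 + (ζ ω).re • D1 (1, 0)) μ := p0.add i1
      have p2 : Integrable (fun ω => f 0 + (ζ ω).re • D1 (1, 0) + (ζ ω).im • D1 (0, 1)) μ := p1.add i2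
      have p3 : Integrable (fun ω => f 0 + (ζ ω).re • D1 (1, 0) + (ζ ω).im • D1 (0, 1) + (2⁻¹ * ((ζ ω).re * (ζ ω).re)) • D2 (1, 0) (1, 0)) μ := p2.add i3
      have p4 : Integrable (fun ω => f 0 + (ζ ω).re • D1 (1, 0) + (ζ ω).im • D1 (0, 1) + (2⁻¹ * ((ζ ω).re * (ζ ω).re)) • D2 (1, 0) (1, 0) + (2⁻¹ * ((ζ ω).re * (ζ ω).im)) • D2 (1, 0) (0, 1)) μ := p3.add i4
      have p5 : Integrable (fun ω => f 0 + (ζ ω).re • D1 (1, 0) + (ζ ω).im • D1 (0, 1) + (2⁻¹ * ((ζ ω).re * (ζ ω).re)) • D2 (1, 0) (1, 0) + (2⁻¹ * ((ζ ω).re * (ζ ω).im)) • D2 (1, 0) (0, 1) + (2⁻¹ * ((ζ ω).im * (ζ ω).re)) • D2 (0, 1) (1, 0)) μ := p4.add i5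
      have p6 : Integrable (fun ω => f 0 + (ζ ω).re • D1 (1, 0) + (ζ ω).im • D1 (0, 1) + (2⁻¹ * ((ζ ω).re * (ζ ω).re)) • D2 (1, 0) (1, 0) + (2⁻¹ * ((ζ ω).re * (ζ ω).im)) • D2 (1, 0) (0, 1) + (2⁻¹ * ((ζ ω).im * (ζ ω).re)) • D2 (0, 1) (1, 0) + (2⁻¹ * ((ζ ω).im * (ζ ω).im)) • D2 (0, 1) (0, 1)) μ := p5.add i6
      rw [integral_add (f := fun ω => f 0 + (ζ ω).re • D1 (1, 0) + (ζ ω).im • D1 (0, 1) + (2⁻¹ * ((ζ ω).re * (ζ ω).re)) • D2 (1, 0) (1, 0) + (2⁻¹ * ((ζ ω).re * (ζ ω).im)) • D2 (1, 0) (0, 1) + (2⁻¹ * ((ζ ω).im * (ζ ω).re)) • D2 (0, 1) (1, 0)) (g := fun ω => (2⁻¹ * ((ζ ω).im * (ζ ω).im)) • D2 (0, 1) (0, 1)) p5 i6]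
      rw [integral_add (f := fun ω => f 0 + (ζ ω).re • D1 (1, 0) + (ζ ω).im • D1 (0, 1) + (2⁻¹ * ((ζ ω).re * (ζ ω).re)) • D2 (1, 0) (1, 0) + (2⁻¹ * ((ζ ω).re * (ζ ω).im)) • D2 (1, 0) (0, 1)) (g := fun ω => (2⁻¹ * ((ζ ω).im * (ζ ω).re)) • D2 (0, 1) (1, 0)) p4 i5]
      rw [integral_add (f := fun ω => f 0 + (ζ ω).re • D1 (1, 0) + (ζ ω).im • D1 (0, 1) + (2⁻¹ * ((ζ ω).re * (ζ ω).re)) • D2 (1, 0) (1, 0)) (g := fun ω => (2⁻¹ * ((ζ ω).re * (ζ ω).im)) • D2 (1, 0) (0, 1)) p3 i4]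
      rw [integral_add (f := fun ω => f 0 + (ζ ω).re • D1 (1, 0) + (ζ ω).im • D1 (0, 1)) (g := fun ω => (2⁻¹ * ((ζ ω).re * (ζ ω).re)) • D2 (1, 0) (1, 0)) p2 i3]
      rw [integral_add (f := fun ω => f 0 + (ζ ω).re • D1 (1, 0)) (g := fun ω => (ζ ω).im • D1 (0, 1)) p1 i2]
      rw [integral_add (f := fun ω => f 0) (g := fun ω => (ζ ω).re • D1 (1, 0)) p0 i1]
      rw [integral_const]
      simp only [measure_univ, ENNReal.toReal_one, probReal_univ, one_smul]
      rw [integral_smul_const, integral_smul_const, integral_smul_const,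
        integral_smul_const, integral_smul_const, integral_smul_const]
      rw [integral_const_mul, integral_const_mul, integral_const_mul, integral_const_mul]
    have hfval : (∫ ω, f ((ζ ω).re, (ζ ω).im) ∂μ) =
        (∫ ω, T ((ζ ω).re, (ζ ω).im) ∂μ) + ∫ ω, g ((ζ ω).re, (ζ ω).im) ∂μ := by
      have heq : (fun ω => f ((ζ ω).re, (ζ ω).im)) = fun ω =>
          T ((ζ ω).re, (ζ ω).im) + g ((ζ ω).re, (ζ ω).im) := by
        funext ω
        simp [hgdef]
      rw [heq, integral_add hTint hgint]
    have hgnorm : ‖∫ ω, g ((ζ ω).re, (ζ ω).im) ∂μ‖ ≤ K * C := by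
      calc ‖∫ ω, g ((ζ ω).re, (ζ ω).im) ∂μ‖
          ≤ ∫ ω, ‖g ((ζ ω).re, (ζ ω).im)‖ ∂μ := norm_integral_le_integral_norm _
        _ ≤ ∫ ω, K * ‖ζ ω‖ ^ (2 + ε) ∂μ :=
            integral_mono hgint.norm (hζn.const_mul K) fun ω => hgζb ω
        _ = K * ∫ ω, ‖ζ ω‖ ^ (2 + ε) ∂μ := integral_const_mul K _
        _ ≤ K * C := mul_le_mul_of_nonneg_left hCζ hK
    exact ⟨hgint, by rw [hfval, hTval], hgnorm⟩
  obtain ⟨hgξint, hfξ, hgξn⟩ := main ξ hmξ hℒξ hCξ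
  obtain ⟨hgξ'int, hfξ', hgξ'n⟩ := main ξ' hmξ' hℒξ' hCξ'
  -- moment identities
  have m10 := hmom 1 0 (by norm_num)
  have m01 := hmom 0 1 (by norm_num)
  have m20 := hmom 2 0 (by norm_num)
  have m11 := hmom 1 1 (by norm_num)
  have m02 := hmom 0 2 (by norm_num)
  simp only [pow_one, pow_zero, mul_one, one_mul] at m10 m01 m11
  simp only [pow_two, pow_zero, pow_one, mul_one, one_mul] at m20 m02
  have m11' : (∫ ω, (ξ ω).im * (ξ ω).re ∂μ) = ∫ ω, (ξ' ω).im * (ξ' ω).re ∂μ := by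
    have e1 : (∫ ω, (ξ ω).im * (ξ ω).re ∂μ) = ∫ ω, (ξ ω).re * (ξ ω).im ∂μ :=
      integral_congr_ae (ae_of_all _ fun ω => mul_comm _ _)
    have e2 : (∫ ω, (ξ' ω).im * (ξ' ω).re ∂μ) = ∫ ω, (ξ' ω).re * (ξ' ω).im ∂μ :=
      integral_congr_ae (ae_of_all _ fun ω => mul_comm _ _)
    rw [e1, e2, m11]
  rw [hfξ, hfξ', m10, m01, m20, m11, m11', m02]
  rw [add_sub_add_left_eq_sub]
  calc ‖(∫ ω, g ((ξ ω).re, (ξ ω).im) ∂μ) - ∫ ω, g ((ξ' ω).re, (ξ' ω).im) ∂μ‖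
      ≤ ‖∫ ω, g ((ξ ω).re, (ξ ω).im) ∂μ‖ + ‖∫ ω, g ((ξ' ω).re, (ξ' ω).im) ∂μ‖ :=
        norm_sub_le _ _
    _ ≤ K * C + K * C := add_le_add hgξn hgξ'n
    _ = 4 * C * M₃ ^ ε * M₂ ^ (1 - ε) := by rw [hKdef]; ring
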